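/- Let v be a flow on a Hausdorff space X and x a point whose orbit O(x) is not closed and whose derived set closure(O(x)) \ O(x) is not closed. Then x ∈ α(x) ∪ ω(x), i.e., the orbit is recurrent. -/

import Mathlib

theorem stmt_9 {X : Type*} [TopologicalSpace X] [T2Space X]
    (v : ℝ → X → X)
    (hc : Continuous fun p : ℝ × X => v p.1 p.2)
    (h0 : ∀ x : X, v 0 x = x)
    (hadd : ∀ s t : ℝ, ∀ x : X, v s (v t x) = v (s + t) x)
    (x : X)
    (hnc : ¬ IsClosed (Set.range fun t => v t x))
    (hd : ¬ IsClosed (closure (Set.range fun t => v t x) \ Set.range fun t => v t x)) :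
    x ∈ (⋂ n : ℝ, closure ((fun t => v t x) '' Set.Iio n)) ∪
        ⋂ n : ℝ, closure ((fun t => v t x) '' Set.Ioi n) := by
  by_contra hx
  set f : ℝ → X := fun t => v t x with hf_def
  have hf : Continuous f := hc.comp (continuous_id.prodMk continuous_const)
  have hvc : ∀ c : ℝ, Continuous (fun y : X => v c y) :=
    fun c => hc.comp (continuous_const.prodMk continuous_id)
  have hshift : ∀ c t : ℝ, v c (f t) = f (c + t) := by
    intro c t; simp only [hf_def, hadd]
  -- invariance of alpha set
  have halpha : ∀ s : ℝ, f s ∈ (⋂ n : ℝ, closure (f '' Set.Iio n)) →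
      x ∈ ⋂ n : ℝ, closure (f '' Set.Iio n) := by
    intro s hy
    refine Set.mem_iInter.2 fun m => ?_
    have hy' : f s ∈ closure (f '' Set.Iio (m + s)) := Set.mem_iInter.1 hy (m + s)
    have hxeq : x = v (-s) (f s) := by
      rw [hshift]; simp [hf_def, h0]
    have h1 : v (-s) (f s) ∈ (fun z => v (-s) z) '' closure (f '' Set.Iio (m + s)) :=
      Set.mem_image_of_mem _ hy'
    have h2 : (fun z => v (-s) z) '' closure (f '' Set.Iio (m + s)) ⊆
        closure ((fun z => v (-s) z) '' (f '' Set.Iio (m + s))) :=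
      image_closure_subset_closure_image (hvc (-s))
    have h3 : (fun z => v (-s) z) '' (f '' Set.Iio (m + s)) ⊆ f '' Set.Iio m := by
      rintro _ ⟨_, ⟨t, ht, rfl⟩, rfl⟩
      exact ⟨-s + t, by simp at ht ⊢; linarith, (hshift (-s) t).symm ▸ rfl⟩
    rw [hxeq]
    exact closure_mono h3 (h2 h1)
  have homega : ∀ s : ℝ, f s ∈ (⋂ n : ℝ, closure (f '' Set.Ioi n)) →
      x ∈ ⋂ n : ℝ, closure (f '' Set.Ioi n) := by
    intro s hy
    refine Set.mem_iInter.2 fun m => ?_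
    have hy' : f s ∈ closure (f '' Set.Ioi (m + s)) := Set.mem_iInter.1 hy (m + s)
    have hxeq : x = v (-s) (f s) := by
      rw [hshift]; simp [hf_def, h0]
    have h1 : v (-s) (f s) ∈ (fun z => v (-s) z) '' closure (f '' Set.Ioi (m + s)) :=
      Set.mem_image_of_mem _ hy'
    have h2 : (fun z => v (-s) z) '' closure (f '' Set.Ioi (m + s)) ⊆
        closure ((fun z => v (-s) z) '' (f '' Set.Ioi (m + s))) :=
      image_closure_subset_closure_image (hvc (-s))
    have h3 : (fun z => v (-s) z) '' (f '' Set.Ioi (m + s)) ⊆ f '' Set.Ioi m := by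
      rintro _ ⟨_, ⟨t, ht, rfl⟩, rfl⟩
      exact ⟨-s + t, by simp at ht ⊢; linarith, (hshift (-s) t).symm ▸ rfl⟩
    rw [hxeq]
    exact closure_mono h3 (h2 h1)
  set L : Set X := (⋂ n : ℝ, closure (f '' Set.Iio n)) ∪ ⋂ n : ℝ, closure (f '' Set.Ioi n)
    with hL_def
  -- closure(range f) \ range f ⊆ L
  have hsub : closure (Set.range f) \ Set.range f ⊆ L := by
    rintro y ⟨hyc, hyr⟩
    by_contra hyL
    rw [hL_def, Set.mem_union, not_or] at hyL
    obtain ⟨ha, hw⟩ := hyL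
    rw [Set.mem_iInter, not_forall] at ha hw
    obtain ⟨n, hn⟩ := ha
    obtain ⟨m, hm⟩ := hw
    set M := max n m with hM
    have hm' : y ∉ closure (f '' Set.Ioi M) := fun h =>
      hm (closure_mono (Set.image_mono (Set.Ioi_subset_Ioi (le_max_right n m))) h)
    have hcover : Set.range f ⊆
        f '' Set.Iio n ∪ f '' Set.Icc n M ∪ f '' Set.Ioi M := by
      rintro _ ⟨t, rfl⟩
      rcases lt_or_ge t n with h | h
      · exact Or.inl (Or.inl ⟨t, h, rfl⟩)
      · rcases le_or_gt t M with h' | h'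
        · exact Or.inl (Or.inr ⟨t, ⟨h, h'⟩, rfl⟩)
        · exact Or.inr ⟨t, h', rfl⟩
    have hmidclosed : IsClosed (f '' Set.Icc n M) :=
      (isCompact_Icc.image hf).isClosed
    have hyc' : y ∈ closure (f '' Set.Iio n) ∪ f '' Set.Icc n M ∪ closure (f '' Set.Ioi M) := by
      have := closure_mono hcover hyc
      rw [closure_union, closure_union, hmidclosed.closure_eq] at this
      exact this
    rcases hyc' with (h | h) | h
    · exact hn h
    · exact hyr (Set.image_subset_range f _ h)
    · exact hm' h
  -- L ⊆ closure(range f) \ range f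
  have hsup : L ⊆ closure (Set.range f) \ Set.range f := by
    intro y hyL
    constructor
    · rcases hyL with h | h
      · exact closure_mono (Set.image_subset_range f _) (Set.mem_iInter.1 h 0)
      · exact closure_mono (Set.image_subset_range f _) (Set.mem_iInter.1 h 0)
    · rintro ⟨s, rfl⟩
      rcases hyL with h | h
      · exact hx (Or.inl (halpha s h))
      · exact hx (Or.inr (homega s h))
  have heq : closure (Set.range f) \ Set.range f = L := Set.Subset.antisymm hsub hsup
  apply hd
  rw [heq]
  exact IsClosed.union (isClosed_iInter fun n => isClosed_closure)
    (isClosed_iInter fun n => isClosed_closure)
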